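/- Let f, g be n×n complex matrices. If exp(f) = exp(g) and the spectrum of f is 2iπ-congruence free, then fg = gf. -/

import Mathlib

open Matrix NormedSpace Complex

section General

variable {𝔸 : Type*} [NormedRing 𝔸] [NormedAlgebra ℂ 𝔸] [CompleteSpace 𝔸]

/-- The entire function `(e^x - 1)/x` applied to an element of a Banach algebra. -/
noncomputable def myC (x : 𝔸) : 𝔸 := ∑' k : ℕ, (((k + 1).factorial : ℂ))⁻¹ • x ^ k

lemma myC_summable (x : 𝔸) :
    Summable fun k : ℕ => (((k + 1).factorial : ℂ))⁻¹ • x ^ k := by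
  refine Summable.of_norm_bounded (norm_expSeries_summable' (𝕂 := ℂ) x) fun k => ?_
  rw [norm_smul, norm_smul]
  gcongr
  rw [norm_inv, norm_inv]
  have h1 : (0:ℝ) < ‖((k.factorial : ℂ))‖ := by
    simp [Complex.norm_natCast, Nat.factorial_pos]
  rw [inv_le_inv₀ _ h1]
  · simp only [Complex.norm_natCast]
    exact_mod_cast Nat.factorial_le (Nat.le_succ k)
  · simp [Complex.norm_natCast, Nat.factorial_pos]

lemma mul_myC_eq (x : 𝔸) :
    x * myC x = ∑' k : ℕ, (((k + 1).factorial : ℂ))⁻¹ • x ^ (k + 1) := by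
  rw [myC]
  have h := (ContinuousLinearMap.mul ℂ 𝔸 x).map_tsum (myC_summable x)
  simp only [ContinuousLinearMap.mul_apply'] at h
  rw [h]
  exact tsum_congr fun k => by rw [mul_smul_comm, ← pow_succ']

lemma myC_mul_eq (x : 𝔸) :
    myC x * x = ∑' k : ℕ, (((k + 1).factorial : ℂ))⁻¹ • x ^ (k + 1) := by
  rw [myC]
  have h := ((ContinuousLinearMap.mul ℂ 𝔸).flip x).map_tsum (myC_summable x)
  simp only [ContinuousLinearMap.flip_apply, ContinuousLinearMap.mul_apply'] at h
  rw [h]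
  exact tsum_congr fun k => by rw [smul_mul_assoc, ← pow_succ]

lemma exp_eq_one_add_mul (x : 𝔸) : exp x = 1 + x * myC x := by
  have hs : Summable fun n : ℕ => ((n.factorial : ℂ))⁻¹ • x ^ n := expSeries_summable' x
  simp only [exp_eq_tsum ℂ]
  rw [Summable.tsum_eq_zero_add hs, mul_myC_eq]
  simp

lemma myC_comm (x : 𝔸) : x * myC x = myC x * x := by rw [mul_myC_eq, myC_mul_eq]

end General

section General2

variable {𝔸 : Type*} [NormedRing 𝔸] [NormedAlgebra ℂ 𝔸] [CompleteSpace 𝔸]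

lemma mulL_pow_apply (x : 𝔸) (k : ℕ) (y : 𝔸) :
    ((ContinuousLinearMap.mul ℂ 𝔸 x) ^ k) y = x ^ k * y := by
  induction k generalizing y with
  | zero => simp
  | succ k ih =>
      rw [pow_succ, ContinuousLinearMap.mul_apply, ContinuousLinearMap.mul_apply', ih,
        pow_succ']
      rw [← mul_assoc, ← pow_succ, ← pow_succ']

lemma mulR_pow_apply (x : 𝔸) (k : ℕ) (y : 𝔸) :
    (((ContinuousLinearMap.mul ℂ 𝔸).flip x) ^ k) y = y * x ^ k := by
  induction k generalizing y with
  | zero => simp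
  | succ k ih =>
      rw [pow_succ, ContinuousLinearMap.mul_apply, ContinuousLinearMap.flip_apply,
        ContinuousLinearMap.mul_apply', ih, pow_succ]
      rw [mul_assoc, ← pow_succ, ← pow_succ']

lemma exp_mulL_apply (x y : 𝔸) :
    (exp (ContinuousLinearMap.mul ℂ 𝔸 x)) y = exp x * y := by
  simp only [exp_eq_tsum ℂ]
  have h := (ContinuousLinearMap.apply ℂ 𝔸 y).map_tsum
    (expSeries_summable' (𝕂 := ℂ) (ContinuousLinearMap.mul ℂ 𝔸 x))
  simp only [ContinuousLinearMap.apply_apply] at h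
  rw [h]
  have h2 := (((ContinuousLinearMap.mul ℂ 𝔸).flip y)).map_tsum (expSeries_summable' (𝕂 := ℂ) x)
  simp only [ContinuousLinearMap.flip_apply, ContinuousLinearMap.mul_apply'] at h2
  rw [h2]
  exact tsum_congr fun k => by
    rw [ContinuousLinearMap.smul_apply, mulL_pow_apply, smul_mul_assoc]

lemma exp_mulR_apply (x y : 𝔸) :
    (exp ((ContinuousLinearMap.mul ℂ 𝔸).flip x)) y = y * exp x := by
  simp only [exp_eq_tsum ℂ]
  have h := (ContinuousLinearMap.apply ℂ 𝔸 y).map_tsum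
    (expSeries_summable' (𝕂 := ℂ) ((ContinuousLinearMap.mul ℂ 𝔸).flip x))
  simp only [ContinuousLinearMap.apply_apply] at h
  rw [h]
  have h2 := ((ContinuousLinearMap.mul ℂ 𝔸) y).map_tsum (expSeries_summable' (𝕂 := ℂ) x)
  simp only [ContinuousLinearMap.mul_apply'] at h2
  rw [h2]
  exact tsum_congr fun k => by
    rw [ContinuousLinearMap.smul_apply, mulR_pow_apply, mul_smul_comm]

end General2

section General3

variable {E : Type*} [NormedAddCommGroup E] [NormedSpace ℂ E] [CompleteSpace E]

lemma myC_apply_eig (T : E →L[ℂ] E) (w : E) (μ : ℂ) (hw : T w = μ • w) :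
    (myC T) w = (∑' k : ℕ, (((k + 1).factorial : ℂ))⁻¹ * μ ^ k) • w := by
  have hp : ∀ k : ℕ, (T ^ k) w = μ ^ k • w := by
    intro k
    induction k with
    | zero => simp
    | succ k ih =>
        rw [pow_succ, ContinuousLinearMap.mul_apply, hw, _root_.map_smul, ih, smul_smul, ← pow_succ']
  have h := (ContinuousLinearMap.apply ℂ E w).map_tsum (myC_summable T)
  simp only [ContinuousLinearMap.apply_apply] at h
  rw [myC, h]
  have hc : ∀ k : ℕ, ((((k + 1).factorial : ℂ))⁻¹ • T ^ k) w
      = ((((k + 1).factorial : ℂ))⁻¹ * μ ^ k) • w := fun k => by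
    rw [ContinuousLinearMap.smul_apply, hp, smul_smul]
  rw [tsum_congr hc]
  refine Summable.tsum_smul_const ?_ w
  simpa [smul_eq_mul] using myC_summable (μ : ℂ)

lemma S_zero_val : (∑' k : ℕ, (((k + 1).factorial : ℂ))⁻¹ * (0 : ℂ) ^ k) = 1 := by
  rw [tsum_eq_single 0]
  · simp
  · intro b hb; simp [zero_pow hb]

lemma mul_S_eq (μ : ℂ) :
    μ * (∑' k : ℕ, (((k + 1).factorial : ℂ))⁻¹ * μ ^ k) = Complex.exp μ - 1 := by
  have h := exp_eq_one_add_mul (𝔸 := ℂ) μ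
  rw [Complex.exp_eq_exp_ℂ, h]
  simp [myC, smul_eq_mul]

end General3

section AdPart
open Polynomial

lemma charpoly_eval_eq {n : ℕ} (M : Matrix (Fin n) (Fin n) ℂ) (ν : ℂ) :
    M.charpoly.eval ν = (Matrix.scalar (Fin n) ν - M).det := by
  rw [Matrix.charpoly, _root_.eval_det, matPolyEquiv_charmatrix]
  simp

example {n : ℕ} (ν : ℂ) :
    (algebraMap ℂ (Matrix (Fin n) (Fin n) ℂ)) ν = Matrix.scalar (Fin n) ν := rfl

lemma mem_spectrum_of_root {n : ℕ} (M : Matrix (Fin n) (Fin n) ℂ) (ν : ℂ)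
    (hroot : M.charpoly.eval ν = 0) : ν ∈ spectrum ℂ M := by
  rw [spectrum.mem_iff, Matrix.isUnit_iff_isUnit_det, isUnit_iff_ne_zero]
  rw [charpoly_eval_eq] at hroot
  exact not_not.mpr hroot

lemma matrix_spectrum_nonempty {n : ℕ} [NeZero n] (M : Matrix (Fin n) (Fin n) ℂ) :
    (spectrum ℂ M).Nonempty := by
  let e := Matrix.toLinAlgEquiv (Pi.basisFun ℂ (Fin n))
  obtain ⟨μ, hμ⟩ := Module.End.exists_eigenvalue (e M)
  exact ⟨μ, (AlgEquiv.spectrum_eq e M) ▸ Module.End.hasEigenvalue_iff_mem_spectrum.mp hμ⟩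

lemma ad_eigen {n : ℕ} (f X : Matrix (Fin n) (Fin n) ℂ) (hX : X ≠ 0) (μ : ℂ)
    (hfX : f * X - X * f = μ • X) :
    ∃ u ∈ spectrum ℂ f, ∃ v ∈ spectrum ℂ f, μ = u - v := by
  rcases Nat.eq_zero_or_pos n with hn | hn
  · subst hn
    exact absurd (by ext i j; exact i.elim0) hX
  haveI : NeZero n := ⟨hn.ne'⟩
  set B := f + μ • (1 : Matrix (Fin n) (Fin n) ℂ) with hB
  have hfX0 : f * X = X * B := by
    have h1 : f * X = μ • X + X * f := sub_eq_iff_eq_add.mp hfX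
    rw [h1, hB, mul_add, mul_smul_comm, mul_one, add_comm]
  have hpow : ∀ k : ℕ, f ^ k * X = X * B ^ k := by
    intro k
    induction k with
    | zero => simp
    | succ k ih =>
        rw [pow_succ', mul_assoc, ih, ← mul_assoc, hfX0, mul_assoc, ← pow_succ']
  have hpoly : ∀ p : Polynomial ℂ, (aeval f p) * X = X * (aeval B p) := by
    intro p
    induction p using Polynomial.induction_on' with
    | add p q hp hq => rw [map_add, map_add, add_mul, mul_add, hp, hq]
    | monomial k a =>
        rw [aeval_monomial, aeval_monomial, mul_assoc, hpow, ← mul_assoc, ← mul_assoc,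
          Algebra.commutes]
  have h0 := hpoly (Matrix.charpoly f)
  rw [Matrix.aeval_self_charpoly, zero_mul] at h0
  have hnu : ¬ IsUnit (aeval B (Matrix.charpoly f)) := by
    rintro ⟨u, hu⟩
    apply hX
    calc X = X * (↑u * ↑u⁻¹) := by rw [Units.mul_inv, mul_one]
    _ = (X * ↑u) * ↑u⁻¹ := by rw [mul_assoc]
    _ = 0 := by rw [hu, ← h0, zero_mul]
  have h0spec : (0 : ℂ) ∈ spectrum ℂ (aeval B (Matrix.charpoly f)) :=
    (spectrum.zero_mem_iff ℂ).mpr hnu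
  rw [spectrum.map_polynomial_aeval_of_nonempty B (Matrix.charpoly f)
    (matrix_spectrum_nonempty B)] at h0spec
  obtain ⟨ν, hν, hν0⟩ := h0spec
  refine ⟨ν, mem_spectrum_of_root f ν hν0, ν - μ, ?_, by ring⟩
  rw [spectrum.mem_iff] at hν ⊢
  have heq : (algebraMap ℂ (Matrix (Fin n) (Fin n) ℂ)) (ν - μ) - f
      = (algebraMap ℂ (Matrix (Fin n) (Fin n) ℂ)) ν - B := by
    rw [map_sub, hB]
    have : (algebraMap ℂ (Matrix (Fin n) (Fin n) ℂ)) μ = μ • 1 :=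
      Algebra.algebraMap_eq_smul_one μ
    rw [this]
    abel
  rw [heq]
  exact hν

end AdPart

set_option maxHeartbeats 1000000 in
theorem stmt_5 {n : ℕ} (f g : Matrix (Fin n) (Fin n) ℂ)
    (hf : ∀ u ∈ spectrum ℂ f, ∀ v ∈ spectrum ℂ f,
      ∀ k : ℤ, k ≠ 0 → u - v ≠ 2 * Real.pi * I * k)
    (h : exp f = exp g) :
    f * g = g * f := by
  rcases Nat.eq_zero_or_pos n with hn | hn
  · subst hn; ext i j; exact i.elim0
  haveI : NeZero n := ⟨hn.ne'⟩
  letI : SeminormedRing (Matrix (Fin n) (Fin n) ℂ) := Matrix.linftyOpSemiNormedRing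
  letI : NormedRing (Matrix (Fin n) (Fin n) ℂ) := Matrix.linftyOpNormedRing
  letI : NormedAlgebra ℂ (Matrix (Fin n) (Fin n) ℂ) := Matrix.linftyOpNormedAlgebra
  letI : UniformSpace (Matrix (Fin n) (Fin n) ℂ) := PseudoMetricSpace.toUniformSpace
  letI : TopologicalSpace (Matrix (Fin n) (Fin n) ℂ) := UniformSpace.toTopologicalSpace
  letI : AddCommMonoid (Matrix (Fin n) (Fin n) ℂ) := AddCommGroup.toAddCommMonoid
  letI : Module ℂ (Matrix (Fin n) (Fin n) ℂ) := NormedSpace.toModule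
  letI : NormedRing (Matrix (Fin n) (Fin n) ℂ →L[ℂ] Matrix (Fin n) (Fin n) ℂ) :=
    ContinuousLinearMap.toNormedRing
  letI : NormedAlgebra ℂ (Matrix (Fin n) (Fin n) ℂ →L[ℂ] Matrix (Fin n) (Fin n) ℂ) :=
    ContinuousLinearMap.toNormedAlgebra
  letI : IsTopologicalRing (Matrix (Fin n) (Fin n) ℂ →L[ℂ] Matrix (Fin n) (Fin n) ℂ) :=
    NonUnitalSeminormedRing.toIsTopologicalRing
  letI : NormedAlgebra ℚ (Matrix (Fin n) (Fin n) ℂ) := .restrictScalars ℚ ℂ _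
  letI : NormedAlgebra ℚ (Matrix (Fin n) (Fin n) ℂ →L[ℂ] Matrix (Fin n) (Fin n) ℂ) :=
    .restrictScalars ℚ ℂ _
  -- `g` commutes with `exp f`
  have hgf : exp f * g = g * exp f := by
    have hc : Commute g (exp g) := (Commute.refl g).exp_right
    rw [show exp f = exp g from h]
    exact hc.symm.eq
  have hinv : exp f * exp (-f) = 1 := by
    rw [← NormedSpace.exp_add_of_commute (Commute.neg_right (Commute.refl f)), add_neg_cancel, NormedSpace.exp_zero]
  -- the operator `ad f`
  let L : Matrix (Fin n) (Fin n) ℂ →L[ℂ] Matrix (Fin n) (Fin n) ℂ :=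
    ContinuousLinearMap.mul ℂ _ f
  let R : Matrix (Fin n) (Fin n) ℂ →L[ℂ] Matrix (Fin n) (Fin n) ℂ :=
    (ContinuousLinearMap.mul ℂ (Matrix (Fin n) (Fin n) ℂ)).flip f
  obtain ⟨A, hA⟩ : ∃ A : Matrix (Fin n) (Fin n) ℂ →L[ℂ] Matrix (Fin n) (Fin n) ℂ, A = L - R :=
    ⟨L - R, rfl⟩
  have hLR : Commute L (-R) := by
    show L * -R = -R * L
    ext y
    simp only [ContinuousLinearMap.mul_apply, ContinuousLinearMap.mul_apply',
      ContinuousLinearMap.flip_apply, ContinuousLinearMap.neg_apply, L, R,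
      mul_neg, neg_mul, neg_inj]
    rw [mul_assoc]
  have hAapp : ∀ y, A y = f * y - y * f := by
    intro y
    rw [hA]
    simp only [L, R, ContinuousLinearMap.sub_apply, ContinuousLinearMap.mul_apply',
      ContinuousLinearMap.flip_apply]
  have hnegR : -R = (ContinuousLinearMap.mul ℂ (Matrix (Fin n) (Fin n) ℂ)).flip (-f) := by
    rw [map_neg]
  -- `g` is a fixed point of `exp (ad f)`
  have hexpA : exp A g = g := by
    have hsplit : exp A = exp L * exp (-R) := by
      rw [hA, sub_eq_add_neg]; exact NormedSpace.exp_add_of_commute hLR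
    calc exp A g = (exp L * exp (-R)) g := by rw [hsplit]
    _ = exp L ((exp (-R)) g) := ContinuousLinearMap.mul_apply _ _ _
    _ = exp L (g * exp (-f)) := by rw [hnegR, exp_mulR_apply]
    _ = exp f * (g * exp (-f)) := exp_mulL_apply _ _
    _ = g := by rw [← mul_assoc, hgf, mul_assoc, hinv, mul_one]
  -- hence the commutator is killed by `myC A`
  have hker : myC A (f * g - g * f) = 0 := by
    have h2 : exp A g = g + (myC A) (A g) := by
      rw [exp_eq_one_add_mul A, myC_comm]
      rw [ContinuousLinearMap.add_apply, ContinuousLinearMap.one_apply,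
        ContinuousLinearMap.mul_apply]
    have h3 : g + (myC A) (A g) = g := h2.symm.trans hexpA
    have h4 : (myC A) (A g) = 0 := by
      have := add_eq_left.mp h3
      exact this
    rw [hAapp] at h4
    exact h4
  -- main argument : the kernel of `myC A` is trivial
  by_contra hne
  have hw₀ : f * g - g * f ≠ 0 := sub_ne_zero.mpr hne
  set K : Submodule ℂ (Matrix (Fin n) (Fin n) ℂ) :=
    LinearMap.ker (myC A).toLinearMap with hK
  have hmemK : ∀ x, x ∈ K ↔ myC A x = 0 := by
    intro x
    simp only [hK, LinearMap.mem_ker]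
    exact Iff.rfl
  have hw₀K : f * g - g * f ∈ K := (hmemK _).mpr hker
  have hKmap : ∀ x ∈ K, A.toLinearMap x ∈ K := by
    intro x hx
    rw [hmemK] at hx ⊢
    have h5 : myC A (A x) = A (myC A x) := by
      rw [← ContinuousLinearMap.mul_apply, ← myC_comm, ContinuousLinearMap.mul_apply]
    show myC A (A.toLinearMap x) = 0
    have hAx : A.toLinearMap x = A x := rfl
    rw [hAx, h5, hx, map_zero]
  let T := LinearMap.restrict A.toLinearMap hKmap
  haveI : Nontrivial K := by
    refine nontrivial_of_ne ⟨f * g - g * f, hw₀K⟩ 0 ?_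
    simp only [ne_eq, Submodule.mk_eq_zero]
    exact hw₀
  obtain ⟨μ, hμ⟩ := Module.End.exists_eigenvalue T
  obtain ⟨v, hv⟩ := hμ.exists_hasEigenvector
  have hwne : (v : Matrix (Fin n) (Fin n) ℂ) ≠ 0 := fun hc => hv.2 (Submodule.coe_eq_zero.mp hc)
  have hAv : A (v : Matrix (Fin n) (Fin n) ℂ) = μ • (v : Matrix (Fin n) (Fin n) ℂ) := by
    have h6 := congrArg (Subtype.val) hv.apply_eq_smul
    rw [LinearMap.restrict_coe_apply] at h6
    rw [Submodule.coe_smul] at h6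
    exact h6
  have hCv : myC A (v : Matrix (Fin n) (Fin n) ℂ) = 0 := (hmemK _).mp v.2
  have hS0 : (∑' k : ℕ, (((k + 1).factorial : ℂ))⁻¹ * μ ^ k) = 0 := by
    have h7 : (∑' k : ℕ, (((k + 1).factorial : ℂ))⁻¹ * μ ^ k) • (v : Matrix (Fin n) (Fin n) ℂ)
        = 0 := by
      rw [← myC_apply_eig A _ μ hAv, hCv]
    rcases smul_eq_zero.mp h7 with h8 | h8
    · exact h8
    · exact absurd h8 hwne
  by_cases hμ0 : μ = 0
  · rw [hμ0, S_zero_val] at hS0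
    exact one_ne_zero hS0
  · have h9 : Complex.exp μ - 1 = 0 := by rw [← mul_S_eq μ, hS0, mul_zero]
    have h10 : Complex.exp μ = 1 := sub_eq_zero.mp h9
    obtain ⟨m, hm⟩ := Complex.exp_eq_one_iff.mp h10
    have hm0 : m ≠ 0 := by
      rintro rfl
      simp only [Int.cast_zero, zero_mul] at hm
      exact hμ0 hm
    obtain ⟨u, hu, v', hv', huv⟩ := ad_eigen f (v : Matrix (Fin n) (Fin n) ℂ) hwne μ
      (by rw [← hAapp]; exact hAv)
    exact hf u hu v' hv' m hm0 (by rw [← huv, hm]; ring)
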